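/- Under the game setup, assume: the pseudo-gradient F is ε-strongly monotone (ε > 0) and ι-Lipschitz, each partial-gradient map F_i : E → E_i is ι-Lipschitz, and x* ∈ E satisfies F(x*) = 0. Let L be an N×N real matrix with L·1_N = 0 and 1_Nᵀ·L = 0, and suppose λ₂ > 0 satisfies vᵀ((L+Lᵀ)/2)v ≥ λ₂‖v‖² for every v ∈ ℝ^N with Σ_i v_i = 0. Let X̃ ∈ E^N be the stacked vector with X̃_i = x* for all i, and for X ∈ E^N define G(X)_i = −ι_i(F_i(X_i)) − κ Σ_j L_{ij} X_j. If κ > (ι²/ε + ι)/λ₂, then there exists λ > 0 (depending only on ε, ι, λ₂, κ, N) such that for every X ∈ E^N: ⟨X − X̃, G(X)⟩ ≤ −λ ‖X − X̃‖². -/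

import Mathlib

open Matrix
open scoped RealInnerProductSpace

noncomputable section

/-- The profile space `E = E_1 × ⋯ × E_N` with the product (ℓ²) inner product,
where `E_i = ℝ^{n i}`. -/
abbrev GSpace {N : ℕ} (n : Fin N → ℕ) : Type :=
  PiLp 2 (fun j : Fin N => EuclideanSpace ℝ (Fin (n j)))

/-- The stacked space `E^N` with the product (ℓ²) inner product. -/
abbrev Stacked {N : ℕ} (n : Fin N → ℕ) : Type :=
  PiLp 2 (fun _ : Fin N => GSpace n)

/-- `ι_i`: the linear embedding of `E_i` into `E` placing a vector in the `i`-th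
block and zero elsewhere. -/
def blockEmb {N : ℕ} (n : Fin N → ℕ) (i : Fin N)
    (z : EuclideanSpace ℝ (Fin (n i))) : GSpace n :=
  WithLp.toLp 2 (Pi.single i z)

lemma piLp_sum_apply {ι : Type*} {α : ι → Type*} [∀ i, AddCommGroup (α i)] {κ : Type*}
    (s : Finset κ) (f : κ → PiLp 2 α) (i : ι) : (∑ j ∈ s, f j) i = ∑ j ∈ s, f j i := by
  induction s using Finset.cons_induction with
  | empty => rfl
  | cons a s ha ih =>
      rw [Finset.sum_cons, Finset.sum_cons]
      show f a i + (∑ j ∈ s, f j) i = _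
      rw [ih]

lemma my_cs {N : ℕ} (p q : Fin N → ℝ) :
    ∑ i, p i * q i ≤ Real.sqrt (∑ i, p i ^ 2) * Real.sqrt (∑ i, q i ^ 2) := by
  have h := real_inner_le_norm (F := EuclideanSpace ℝ (Fin N))
    ((WithLp.equiv 2 _).symm p) ((WithLp.equiv 2 _).symm q)
  simpa [PiLp.inner_apply, RCLike.inner_apply, EuclideanSpace.norm_eq,
    Real.norm_eq_abs, sq_abs, mul_comm] using h

lemma block_norm_le {N : ℕ} (n : Fin N → ℕ) (x : GSpace n) (i : Fin N) :
    ‖x i‖ ≤ ‖x‖ := by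
  have h1 : ‖x i‖ ^ 2 ≤ ‖x‖ ^ 2 := by
    rw [show ‖x‖ ^ 2 = ∑ k, ‖x k‖ ^ 2 from PiLp.norm_sq_eq_of_L2 _ x]
    exact Finset.single_le_sum (f := fun k => ‖x k‖ ^ 2) (fun k _ => sq_nonneg _)
      (Finset.mem_univ i)
  calc ‖x i‖ = Real.sqrt (‖x i‖ ^ 2) := (Real.sqrt_sq (norm_nonneg _)).symm
    _ ≤ Real.sqrt (‖x‖ ^ 2) := Real.sqrt_le_sqrt h1
    _ = ‖x‖ := Real.sqrt_sq (norm_nonneg _)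

lemma quad_sym {N : ℕ} (L : Matrix (Fin N) (Fin N) ℝ) (v : Fin N → ℝ) :
    v ⬝ᵥ ((((2:ℝ)⁻¹) • (L + Lᵀ)).mulVec v) = ∑ i, ∑ j, L i j * (v i * v j) := by
  have hB : ∑ i, ∑ j, L j i * (v i * v j) = ∑ i, ∑ j, L i j * (v i * v j) := by
    rw [Finset.sum_comm]
    exact Finset.sum_congr rfl fun i _ => Finset.sum_congr rfl fun j _ => by ring
  have expand : v ⬝ᵥ ((((2:ℝ)⁻¹) • (L + Lᵀ)).mulVec v)
      = ∑ i, ∑ j, ((2:ℝ)⁻¹ * (L i j * (v i * v j)) + (2:ℝ)⁻¹ * (L j i * (v i * v j))) := by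
    simp only [dotProduct, Matrix.mulVec, Matrix.smul_apply, Matrix.add_apply,
      Matrix.transpose_apply, smul_eq_mul, Finset.mul_sum]
    exact Finset.sum_congr rfl fun i _ => Finset.sum_congr rfl fun j _ => by ring
  rw [expand]
  simp only [Finset.sum_add_distrib, ← Finset.mul_sum]
  rw [hB]; ring

lemma lap_gap {N : ℕ} {E : Type*} [NormedAddCommGroup E] [InnerProductSpace ℝ E]
    [FiniteDimensional ℝ E] (L : Matrix (Fin N) (Fin N) ℝ) (lam₂ : ℝ)
    (hquad : ∀ v : Fin N → ℝ, ∑ i, v i = 0 →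
      lam₂ * ∑ i, (v i) ^ 2 ≤ ∑ i, ∑ j, L i j * (v i * v j))
    (W : Fin N → E) (hWsum : ∑ i, W i = 0) :
    lam₂ * ∑ i, ‖W i‖ ^ 2 ≤ ∑ i, ∑ j, L i j * ⟪W i, W j⟫ := by
  set d := Module.finrank ℝ E
  set b := stdOrthonormalBasis ℝ E with hb
  set w : Fin N → Fin d → ℝ := fun i s => ⟪W i, b s⟫ with hw
  have hin : ∀ i j, ⟪W i, W j⟫ = ∑ s, w i s * w j s := by
    intro i j
    rw [← b.sum_inner_mul_inner (W i) (W j)]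
    exact Finset.sum_congr rfl fun s _ => by rw [real_inner_comm (W j) (b s)]
  have hnorm : ∀ i, ‖W i‖ ^ 2 = ∑ s, (w i s) ^ 2 := by
    intro i
    rw [← real_inner_self_eq_norm_sq, hin i i]
    exact Finset.sum_congr rfl fun s _ => (sq (w i s)).symm ▸ rfl
  have hzero : ∀ s, ∑ i, w i s = 0 := by
    intro s
    simp only [hw]
    rw [← sum_inner, hWsum, inner_zero_left]
  calc lam₂ * ∑ i, ‖W i‖ ^ 2
      = ∑ s, lam₂ * ∑ i, (w i s) ^ 2 := by
        simp only [hnorm]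
        rw [Finset.sum_comm, ← Finset.mul_sum]
    _ ≤ ∑ s, ∑ i, ∑ j, L i j * (w i s * w j s) :=
        Finset.sum_le_sum fun s _ => hquad (fun i => w i s) (hzero s)
    _ = ∑ i, ∑ s, ∑ j, L i j * (w i s * w j s) := Finset.sum_comm
    _ = ∑ i, ∑ j, L i j * ⟪W i, W j⟫ := by
        refine Finset.sum_congr rfl fun i _ => ?_
        rw [Finset.sum_comm]
        refine Finset.sum_congr rfl fun j _ => ?_
        rw [hin i j, Finset.mul_sum]

set_option maxHeartbeats 1000000 in
/-- Under strong monotonicity and Lipschitz assumptions on the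
pseudo-gradient, a spectral-gap condition on `(L+Lᵀ)/2` over sum-zero vectors, and
`κ > (ι²/ε + ι)/λ₂`, the augmented gradient field `G` satisfies a strong
one-sided dissipativity bound `⟨X − X̃, G(X)⟩ ≤ −λ‖X − X̃‖²` for some `λ > 0`. -/
theorem augmented_field_strongly_dissipative
    (N : ℕ) (hN : 1 ≤ N) (n : Fin N → ℕ)
    (Fp : ∀ i : Fin N, GSpace n → EuclideanSpace ℝ (Fin (n i)))
    (F : GSpace n → GSpace n) (hFdef : ∀ x i, F x i = Fp i x)
    (ε ι : ℝ) (hε : 0 < ε) (hι : 0 < ι)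
    (hmono : ∀ x y : GSpace n, ε * ‖x - y‖ ^ 2 ≤ ⟪x - y, F x - F y⟫)
    (hFLip : ∀ x y : GSpace n, ‖F x - F y‖ ≤ ι * ‖x - y‖)
    (hFpLip : ∀ i, ∀ x y : GSpace n, ‖Fp i x - Fp i y‖ ≤ ι * ‖x - y‖)
    (xstar : GSpace n) (hstar : F xstar = 0)
    (L : Matrix (Fin N) (Fin N) ℝ)
    (hL1 : L.mulVec (fun _ => 1) = 0)
    (hL2 : Matrix.vecMul (fun _ => 1) L = 0)
    (lam₂ : ℝ) (hlam₂ : 0 < lam₂)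
    (hgap : ∀ v : Fin N → ℝ, ∑ i, v i = 0 →
      lam₂ * (v ⬝ᵥ v) ≤ v ⬝ᵥ ((((2:ℝ)⁻¹) • (L + Lᵀ)).mulVec v))
    (κ : ℝ) (hκ : κ > (ι ^ 2 / ε + ι) / lam₂)
    (Xt : Stacked n) (hXt : ∀ i, Xt i = xstar)
    (G : Stacked n → Stacked n)
    (hG : ∀ X i, G X i = -blockEmb n i (Fp i (X i)) - κ • ∑ j, L i j • X j) :
    ∃ lam > 0, ∀ X : Stacked n, ⟪X - Xt, G X⟫ ≤ -lam * ‖X - Xt‖ ^ 2 := by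
  -- scalar constants
  have hκlam : ι ^ 2 / ε + ι < κ * lam₂ := by
    have h := (div_lt_iff₀ hlam₂).mp hκ
    linarith
  have hκ0 : 0 < κ := by
    have h1 : (0:ℝ) < ι ^ 2 / ε + ι := by positivity
    nlinarith
  set c : ℝ := κ * lam₂ - ι with hc
  have hcε : ι ^ 2 / ε < c := by rw [hc]; linarith
  have hc0 : (0:ℝ) < c := lt_trans (by positivity) hcε
  have hιc : ι ^ 2 / c < ε := by
    rw [div_lt_iff₀ hc0]
    have h2 := (div_lt_iff₀ hε).mp hcε
    nlinarith
  set t : ℝ := (ι ^ 2 / c + ε) / 2 with htdef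
  have ht0 : 0 < t := by rw [htdef]; positivity
  have htε : t < ε := by rw [htdef]; linarith
  have htc : ι ^ 2 / c < t := by rw [htdef]; linarith
  have hι2t : ι ^ 2 < c * t := by
    have := (div_lt_iff₀ hc0).mp htc
    nlinarith
  set μ : ℝ := min (ε - t) ((c * t - ι ^ 2) / t) with hμdef
  have hμ0 : 0 < μ := lt_min (by linarith) (div_pos (by linarith) ht0)
  have hμ1 : μ ≤ ε - t := min_le_left _ _
  have hμ2 : μ * t ≤ c * t - ι ^ 2 := by
    have h := min_le_right (ε - t) ((c * t - ι ^ 2) / t)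
    rw [← hμdef] at h
    calc μ * t ≤ ((c * t - ι ^ 2) / t) * t := mul_le_mul_of_nonneg_right h ht0.le
      _ = c * t - ι ^ 2 := by field_simp
  clear_value μ t c
  have hNR : (0:ℝ) < (N:ℝ) := by exact_mod_cast Nat.lt_of_lt_of_le Nat.zero_lt_one hN
  refine ⟨μ / N, div_pos hμ0 hNR, ?_⟩
  intro X
  -- row and column sums of L vanish
  have hrow : ∀ i, ∑ j, L i j = 0 := by
    intro i
    have h := congrFun hL1 i
    simpa [Matrix.mulVec, dotProduct] using h
  have hcol : ∀ j, ∑ i, L i j = 0 := by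
    intro j
    have h := congrFun hL2 j
    simpa [Matrix.vecMul, dotProduct] using h
  -- decomposition
  set Y : Fin N → GSpace n := fun i => X i - xstar with hYdef
  set yb : GSpace n := (N:ℝ)⁻¹ • ∑ i, Y i with hybdef
  set W : Fin N → GSpace n := fun i => Y i - yb with hWdef
  have hYW : ∀ i, Y i = yb + W i := by
    intro i; simp only [hWdef]; abel
  have hWsum : ∑ i, W i = 0 := by
    have hNyb : (N:ℝ) • yb = ∑ i, Y i := by
      rw [hybdef, smul_smul, mul_inv_cancel₀ (ne_of_gt hNR), one_smul]
    simp only [hWdef]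
    rw [Finset.sum_sub_distrib, Finset.sum_const, Finset.card_univ, Fintype.card_fin,
      ← Nat.cast_smul_eq_nsmul ℝ, hNyb, sub_self]
  set a : ℝ := ‖yb‖ with hadef
  set b : ℝ := Real.sqrt (∑ i, ‖W i‖ ^ 2) with hbdef
  have ha0 : 0 ≤ a := by rw [hadef]; exact norm_nonneg _
  have hb0 : 0 ≤ b := by rw [hbdef]; exact Real.sqrt_nonneg _
  have hb2 : b ^ 2 = ∑ i, ‖W i‖ ^ 2 := by
    rw [hbdef]; exact Real.sq_sqrt (Finset.sum_nonneg fun i _ => sq_nonneg _)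
  clear_value b a
  have hXY : ∀ i, (X - Xt) i = Y i := by
    intro i; rw [PiLp.sub_apply, hXt i, hYdef]
  -- norm split
  have hnormsplit : ‖X - Xt‖ ^ 2 = N * a ^ 2 + b ^ 2 := by
    rw [PiLp.norm_sq_eq_of_L2]
    have h1 : ∀ i, ‖(X - Xt) i‖ ^ 2 = a ^ 2 + 2 * ⟪yb, W i⟫ + ‖W i‖ ^ 2 := by
      intro i; rw [hXY i, hYW i, norm_add_sq_real, hadef]
    rw [show (∑ i, ‖(X - Xt) i‖ ^ 2)
        = ∑ i, (a ^ 2 + 2 * ⟪yb, W i⟫ + ‖W i‖ ^ 2) from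
      Finset.sum_congr rfl fun i _ => h1 i]
    rw [Finset.sum_add_distrib, Finset.sum_add_distrib, Finset.sum_const,
      Finset.card_univ, Fintype.card_fin, ← Finset.mul_sum, ← inner_sum, hWsum,
      inner_zero_right, nsmul_eq_mul, ← hb2]
    ring
  -- inner product of a vector with a block embedding
  have hemb : ∀ (y : GSpace n) (i : Fin N) (z : EuclideanSpace ℝ (Fin (n i))),
      ⟪y, blockEmb n i z⟫ = ⟪y i, z⟫ := by
    intro y i z
    rw [PiLp.inner_apply]
    rw [show (∑ k, ⟪y k, (blockEmb n i z) k⟫) = ⟪y i, (blockEmb n i z) i⟫ from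
      Finset.sum_eq_single i
        (fun k _ hk => by simp [blockEmb, Pi.single_eq_of_ne hk])
        (fun h => absurd (Finset.mem_univ i) h)]
    simp [blockEmb]
  have hshift : ∀ i, ∑ j, L i j • X j = ∑ j, L i j • Y j := by
    intro i
    have hXj : ∀ j, X j = Y j + xstar := by intro j; simp only [hYdef]; abel
    calc ∑ j, L i j • X j = ∑ j, (L i j • Y j + L i j • xstar) := by
          refine Finset.sum_congr rfl fun j _ => ?_
          rw [hXj j, smul_add]
      _ = (∑ j, L i j • Y j) + (∑ j, L i j) • xstar := by
          rw [Finset.sum_add_distrib, Finset.sum_smul]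
      _ = ∑ j, L i j • Y j := by rw [hrow i, zero_smul, add_zero]
  have hGinner : ∀ i, ⟪Y i, G X i⟫
      = -⟪Y i i, Fp i (X i)⟫ - κ * ∑ j, L i j * ⟪Y i, Y j⟫ := by
    intro i
    rw [hG X i, inner_sub_right, inner_neg_right, hemb (Y i) i _, hshift i,
      real_inner_smul_right, inner_sum]
    simp only [real_inner_smul_right]
  have hmain : ⟪X - Xt, G X⟫
      = -(∑ i, ⟪Y i i, Fp i (X i)⟫) - κ * ∑ i, ∑ j, L i j * ⟪Y i, Y j⟫ := by
    rw [PiLp.inner_apply]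
    rw [show (∑ i, ⟪(X - Xt) i, (G X) i⟫)
        = ∑ i, (-⟪Y i i, Fp i (X i)⟫ - κ * ∑ j, L i j * ⟪Y i, Y j⟫) from
      Finset.sum_congr rfl fun i _ => by rw [hXY i]; exact hGinner i]
    rw [Finset.sum_sub_distrib, Finset.sum_neg_distrib, ← Finset.mul_sum]
  -- Laplacian term only sees W
  have hYY : ∀ i j, ⟪Y i, Y j⟫ = a ^ 2 + ⟪yb, W j⟫ + ⟪W i, yb⟫ + ⟪W i, W j⟫ := by
    intro i j
    rw [hYW i, hYW j, inner_add_left, inner_add_right, inner_add_right,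
      real_inner_self_eq_norm_sq, hadef]
    ring
  have hlapY : ∑ i, ∑ j, L i j * ⟪Y i, Y j⟫ = ∑ i, ∑ j, L i j * ⟪W i, W j⟫ := by
    have E1 : ∑ i, ∑ j, L i j * a ^ 2 = 0 :=
      Finset.sum_eq_zero fun i _ => by rw [← Finset.sum_mul, hrow i, zero_mul]
    have E2 : ∑ i, ∑ j, L i j * ⟪yb, W j⟫ = 0 := by
      rw [Finset.sum_comm]
      exact Finset.sum_eq_zero fun j _ => by rw [← Finset.sum_mul, hcol j, zero_mul]
    have E3 : ∑ i, ∑ j, L i j * ⟪W i, yb⟫ = 0 :=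
      Finset.sum_eq_zero fun i _ => by rw [← Finset.sum_mul, hrow i, zero_mul]
    calc ∑ i, ∑ j, L i j * ⟪Y i, Y j⟫
        = ∑ i, ∑ j, (L i j * a ^ 2 + L i j * ⟪yb, W j⟫ + L i j * ⟪W i, yb⟫
            + L i j * ⟪W i, W j⟫) := by
          refine Finset.sum_congr rfl fun i _ => Finset.sum_congr rfl fun j _ => ?_
          rw [hYY i j]; ring
      _ = ∑ i, ∑ j, L i j * ⟪W i, W j⟫ := by
          simp only [Finset.sum_add_distrib]
          rw [E1, E2, E3]; ring
  have hlapW : lam₂ * b ^ 2 ≤ ∑ i, ∑ j, L i j * ⟪W i, W j⟫ := by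
    rw [hb2]
    refine lap_gap L lam₂ ?_ W hWsum
    intro v hv
    have h := hgap v hv
    rw [quad_sym] at h
    have hvv : v ⬝ᵥ v = ∑ i, (v i) ^ 2 := by
      simp [dotProduct, pow_two]
    rwa [hvv] at h
  -- gradient term
  set xb : GSpace n := xstar + yb with hxbdef
  have hxbstar : xb - xstar = yb := by simp only [hxbdef]; abel
  have hXxb : ∀ i, X i - xb = W i := by
    intro i; simp only [hxbdef, hWdef, hYdef]; abel
  have hmonoc : ε * a ^ 2 ≤ ⟪yb, F xb⟫ := by
    have h := hmono xb xstar
    rw [hstar, sub_zero, hxbstar, ← hadef] at h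
    exact h
  set R : ∀ i, EuclideanSpace ℝ (Fin (n i)) := fun i => Fp i (X i) - Fp i xb with hRdef
  have hRle : ∀ i, ‖R i‖ ≤ ι * ‖W i‖ := by
    intro i
    have h := hFpLip i (X i) xb
    rwa [hXxb i] at h
  have hsplit : ∀ i, ⟪Y i i, Fp i (X i)⟫
      = ⟪yb i, Fp i xb⟫ + ⟪yb i, R i⟫ + ⟪W i i, Fp i xb⟫ + ⟪W i i, R i⟫ := by
    intro i
    have h1 : Y i i = yb i + W i i := by rw [hYW i]; rfl
    have h2 : Fp i (X i) = Fp i xb + R i := by simp only [hRdef]; abel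
    rw [h1, h2, inner_add_left, inner_add_right, inner_add_right]
    ring
  have hP1 : ∑ i, ⟪yb i, Fp i xb⟫ = ⟪yb, F xb⟫ := by
    rw [PiLp.inner_apply]
    exact (Finset.sum_congr rfl fun i _ => by rw [hFdef]).symm
  have hsumyb : ∑ i, ‖yb i‖ ^ 2 = a ^ 2 := by
    rw [hadef]; exact (PiLp.norm_sq_eq_of_L2 _ yb).symm
  have hsqyb : Real.sqrt (∑ i, ‖yb i‖ ^ 2) = a := by
    rw [hsumyb]; exact Real.sqrt_sq ha0
  have hFxb : Real.sqrt (∑ i, ‖Fp i xb‖ ^ 2) ≤ ι * a := by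
    have h1 : ∑ i, ‖Fp i xb‖ ^ 2 = ‖F xb‖ ^ 2 := by
      rw [PiLp.norm_sq_eq_of_L2]
      exact Finset.sum_congr rfl fun i _ => by rw [hFdef]
    rw [h1, Real.sqrt_sq (norm_nonneg _)]
    have h2 := hFLip xb xstar
    rwa [hstar, sub_zero, hxbstar, ← hadef] at h2
  have hsqW : Real.sqrt (∑ i, ‖W i‖ ^ 2) = b := hbdef.symm
  have hsqWi : Real.sqrt (∑ i, ‖W i i‖ ^ 2) ≤ b := by
    rw [← hsqW]
    refine Real.sqrt_le_sqrt (Finset.sum_le_sum fun i _ => ?_)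
    exact pow_le_pow_left₀ (norm_nonneg _) (block_norm_le n (W i) i) 2
  -- the three cross-term bounds
  have hB1 : |∑ i, ⟪yb i, R i⟫| ≤ ι * (a * b) := by
    calc |∑ i, ⟪yb i, R i⟫| ≤ ∑ i, |⟪yb i, R i⟫| := Finset.abs_sum_le_sum_abs _ _
      _ ≤ ∑ i, ‖yb i‖ * ‖R i‖ := Finset.sum_le_sum fun i _ => abs_real_inner_le_norm _ _
      _ ≤ ∑ i, ‖yb i‖ * (ι * ‖W i‖) :=
          Finset.sum_le_sum fun i _ => mul_le_mul_of_nonneg_left (hRle i) (norm_nonneg _)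
      _ = ι * ∑ i, ‖yb i‖ * ‖W i‖ := by
          rw [Finset.mul_sum]
          exact Finset.sum_congr rfl fun i _ => by ring
      _ ≤ ι * (Real.sqrt (∑ i, ‖yb i‖ ^ 2) * Real.sqrt (∑ i, ‖W i‖ ^ 2)) :=
          mul_le_mul_of_nonneg_left (my_cs _ _) hι.le
      _ = ι * (a * b) := by rw [hsqyb, hsqW]
  have hB2 : |∑ i, ⟪W i i, Fp i xb⟫| ≤ b * (ι * a) := by
    calc |∑ i, ⟪W i i, Fp i xb⟫| ≤ ∑ i, |⟪W i i, Fp i xb⟫| := Finset.abs_sum_le_sum_abs _ _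
      _ ≤ ∑ i, ‖W i i‖ * ‖Fp i xb‖ := Finset.sum_le_sum fun i _ => abs_real_inner_le_norm _ _
      _ ≤ Real.sqrt (∑ i, ‖W i i‖ ^ 2) * Real.sqrt (∑ i, ‖Fp i xb‖ ^ 2) := my_cs _ _
      _ ≤ b * (ι * a) := by
          refine mul_le_mul hsqWi hFxb (Real.sqrt_nonneg _) hb0
  have hB3 : |∑ i, ⟪W i i, R i⟫| ≤ ι * b ^ 2 := by
    calc |∑ i, ⟪W i i, R i⟫| ≤ ∑ i, |⟪W i i, R i⟫| := Finset.abs_sum_le_sum_abs _ _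
      _ ≤ ∑ i, ‖W i i‖ * ‖R i‖ := Finset.sum_le_sum fun i _ => abs_real_inner_le_norm _ _
      _ ≤ ∑ i, ‖W i‖ * (ι * ‖W i‖) := Finset.sum_le_sum fun i _ =>
          mul_le_mul (block_norm_le n (W i) i) (hRle i) (norm_nonneg _) (norm_nonneg _)
      _ = ι * ∑ i, ‖W i‖ ^ 2 := by
          rw [Finset.mul_sum]
          exact Finset.sum_congr rfl fun i _ => by ring
      _ = ι * b ^ 2 := by rw [hb2]
  have hgrad : ε * a ^ 2 - ι * (a * b) - b * (ι * a) - ι * b ^ 2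
      ≤ ∑ i, ⟪Y i i, Fp i (X i)⟫ := by
    rw [show (∑ i, ⟪Y i i, Fp i (X i)⟫)
        = ∑ i, (⟪yb i, Fp i xb⟫ + ⟪yb i, R i⟫ + ⟪W i i, Fp i xb⟫ + ⟪W i i, R i⟫) from
      Finset.sum_congr rfl fun i _ => hsplit i]
    rw [Finset.sum_add_distrib, Finset.sum_add_distrib, Finset.sum_add_distrib, hP1]
    have g1 := (abs_le.mp hB1).1
    have g2 := (abs_le.mp hB2).1
    have g3 := (abs_le.mp hB3).1
    linarith [hmonoc]
  -- quadratic-form algebra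
  have e1 : 0 ≤ t * a ^ 2 - 2 * ι * (a * b) + (ι ^ 2 / t) * b ^ 2 := by
    have he : t * (t * a ^ 2 - 2 * ι * (a * b) + (ι ^ 2 / t) * b ^ 2)
        = (t * a - ι * b) ^ 2 := by field_simp; ring
    have h2 : t * 0 ≤ t * (t * a ^ 2 - 2 * ι * (a * b) + (ι ^ 2 / t) * b ^ 2) := by
      rw [mul_zero, he]; exact sq_nonneg _
    exact le_of_mul_le_mul_left h2 ht0
  have key : μ * (a ^ 2 + b ^ 2) ≤ ε * a ^ 2 - 2 * ι * (a * b) + c * b ^ 2 := by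
    have k1 : μ * a ^ 2 ≤ (ε - t) * a ^ 2 := mul_le_mul_of_nonneg_right hμ1 (sq_nonneg a)
    have hμ2' : μ ≤ c - ι ^ 2 / t := by
      have hd : ι ^ 2 / t ≤ c - μ := by
        rw [div_le_iff₀ ht0]
        nlinarith [hμ2]
      linarith
    have k2 : μ * b ^ 2 ≤ (c - ι ^ 2 / t) * b ^ 2 :=
      mul_le_mul_of_nonneg_right hμ2' (sq_nonneg b)
    linarith [e1, k1, k2]
  -- conclusion
  have hκlap : κ * (lam₂ * b ^ 2) ≤ κ * ∑ i, ∑ j, L i j * ⟪W i, W j⟫ :=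
    mul_le_mul_of_nonneg_left hlapW hκ0.le
  have hfinal : ⟪X - Xt, G X⟫ ≤ -(μ / N) * (N * a ^ 2 + b ^ 2) := by
    rw [hmain, hlapY]
    have h1 : -(∑ i, ⟪Y i i, Fp i (X i)⟫) - κ * ∑ i, ∑ j, L i j * ⟪W i, W j⟫
        ≤ -(ε * a ^ 2 - ι * (a * b) - b * (ι * a) - ι * b ^ 2) - κ * (lam₂ * b ^ 2) := by
      linarith [hgrad, hκlap]
    have h2 : -(ε * a ^ 2 - ι * (a * b) - b * (ι * a) - ι * b ^ 2) - κ * (lam₂ * b ^ 2)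
        ≤ -(μ / N) * (N * a ^ 2 + b ^ 2) := by
      have hNμ : (μ / N) * (N * a ^ 2 + b ^ 2) ≤ μ * (a ^ 2 + b ^ 2) := by
        have hN1 : (1:ℝ) ≤ (N:ℝ) := by exact_mod_cast hN
        have hdiv : μ / N ≤ μ := by
          rw [div_le_iff₀ hNR]; nlinarith
        have heq : (μ / N) * ((N:ℝ) * a ^ 2 + b ^ 2) = μ * a ^ 2 + (μ / N) * b ^ 2 := by
          field_simp
        rw [heq, mul_add]
        exact add_le_add le_rfl (mul_le_mul_of_nonneg_right hdiv (sq_nonneg b))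
      have hcc : ε * a ^ 2 - 2 * ι * (a * b) + c * b ^ 2
          = ε * a ^ 2 - ι * (a * b) - b * (ι * a) - ι * b ^ 2 + κ * (lam₂ * b ^ 2) := by
        rw [hc]; ring
      linarith [key]
    linarith
  rw [hnormsplit]
  exact hfinal
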